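/- Let n ≥ 1 and let f : ℝⁿ → ℝⁿ be a continuous open map satisfying the growth condition with constant R' > 0. Suppose x ∉ I(f) and there exists δ > 0 such that every point y with 0 < ‖y − x‖ < 2δ belongs to I(f). Then there exists N ≥ 1 with f^N(x) = x, and every point of ℝⁿ \ {x} belongs to I(f). -/

import Mathlib

open Filter Metric Set

/-- The escaping set `I(f)` of a map `f : ℝⁿ → ℝⁿ`:
points whose orbit under iteration tends to infinity. -/
def escapingSet {n : ℕ} (f : EuclideanSpace ℝ (Fin n) → EuclideanSpace ℝ (Fin n)) :
    Set (EuclideanSpace ℝ (Fin n)) :=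
  {x | Tendsto (fun k => ‖f^[k] x‖) atTop atTop}

/-- `f` satisfies the growth condition with constant `R' > 0` if
`‖f x‖ > 2‖x‖` whenever `‖x‖ > R'`. -/
def GrowthCondition {n : ℕ} (f : EuclideanSpace ℝ (Fin n) → EuclideanSpace ℝ (Fin n))
    (R' : ℝ) : Prop :=
  ∀ x, R' < ‖x‖ → 2 * ‖x‖ < ‖f x‖

lemma aux_iter_mem {n : ℕ} {f : EuclideanSpace ℝ (Fin n) → EuclideanSpace ℝ (Fin n)}
    (k : ℕ) (z : EuclideanSpace ℝ (Fin n)) :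
    z ∈ escapingSet f ↔ f^[k] z ∈ escapingSet f := by
  simp only [escapingSet, mem_setOf_eq]
  rw [← tendsto_add_atTop_iff_nat (f := fun j => ‖f^[j] z‖) k]
  apply tendsto_congr
  intro j
  rw [Function.iterate_add_apply]

lemma aux_big {n : ℕ} {f : EuclideanSpace ℝ (Fin n) → EuclideanSpace ℝ (Fin n)}
    {R' : ℝ} (hR' : 0 < R') (hgrow : GrowthCondition f R')
    {z : EuclideanSpace ℝ (Fin n)} (hz : R' < ‖z‖) (j : ℕ) :
    2 ^ j * R' < ‖f^[j] z‖ := by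
  induction j with
  | zero => simpa using hz
  | succ j ih =>
    have h0 : (1:ℝ) ≤ 2 ^ j := one_le_pow₀ one_le_two
    have h1 : R' < ‖f^[j] z‖ := by nlinarith
    have h2 := hgrow _ h1
    rw [Function.iterate_succ_apply']
    have : (2:ℝ) ^ (j + 1) * R' = 2 * (2 ^ j * R') := by ring
    rw [this]
    nlinarith

lemma aux_escapes {n : ℕ} {f : EuclideanSpace ℝ (Fin n) → EuclideanSpace ℝ (Fin n)}
    {R' : ℝ} (hR' : 0 < R') (hgrow : GrowthCondition f R')
    {z : EuclideanSpace ℝ (Fin n)} (hz : R' < ‖z‖) : z ∈ escapingSet f := by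
  have h1 : Tendsto (fun j : ℕ => (2:ℝ) ^ j * R') atTop atTop :=
    Tendsto.atTop_mul_const hR' (tendsto_pow_atTop_atTop_of_one_lt one_lt_two)
  exact tendsto_atTop_mono (fun j => (aux_big hR' hgrow hz j).le) h1

lemma aux_bounded {n : ℕ} {f : EuclideanSpace ℝ (Fin n) → EuclideanSpace ℝ (Fin n)}
    {R' : ℝ} (hR' : 0 < R') (hgrow : GrowthCondition f R')
    {z : EuclideanSpace ℝ (Fin n)} (hz : z ∉ escapingSet f) (k : ℕ) :
    ‖f^[k] z‖ ≤ R' := by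
  by_contra h
  push_neg at h
  exact hz ((aux_iter_mem k z).mpr (aux_escapes hR' hgrow h))

theorem stmt_15 (n : ℕ) (hn : 1 ≤ n)
    (f : EuclideanSpace ℝ (Fin n) → EuclideanSpace ℝ (Fin n))
    (hf : Continuous f) (hopen : IsOpenMap f)
    (R' : ℝ) (hR' : 0 < R') (hgrow : GrowthCondition f R')
    (x : EuclideanSpace ℝ (Fin n)) (hx : x ∉ escapingSet f)
    (δ : ℝ) (hδ : 0 < δ)
    (hpunct : ∀ y : EuclideanSpace ℝ (Fin n), 0 < ‖y - x‖ → ‖y - x‖ < 2 * δ →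
      y ∈ escapingSet f) :
    (∃ N : ℕ, 1 ≤ N ∧ f^[N] x = x) ∧
      ∀ y : EuclideanSpace ℝ (Fin n), y ≠ x → y ∈ escapingSet f := by
  -- every point of the sphere of radius δ around x escapes, so some iterate exceeds R'
  have hS : ∀ y ∈ sphere x δ, ∃ k, R' < ‖f^[k] y‖ := by
    intro y hy
    rw [mem_sphere] at hy
    have h1 : y ∈ escapingSet f := by
      apply hpunct
      · rw [← dist_eq_norm, hy]; exact hδ
      · rw [← dist_eq_norm, hy]; linarith
    exact (h1.eventually (eventually_gt_atTop R')).exists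
  -- compactness: a uniform bound m on the first escape time over the sphere
  obtain ⟨t, ht⟩ := (isCompact_sphere x δ).elim_finite_subcover
      (fun k : ℕ => {y | R' < ‖f^[k] y‖})
      (fun k => isOpen_lt continuous_const ((hf.iterate k).norm))
      (by
        intro y hy
        obtain ⟨k, hk⟩ := hS y hy
        exact mem_iUnion.mpr ⟨k, hk⟩)
  set m := t.sup id with hm
  have hunif : ∀ y ∈ sphere x δ, ∃ k ≤ m, R' < ‖f^[k] y‖ := by
    intro y hy
    obtain ⟨k, hkt, hk⟩ := mem_iUnion₂.mp (ht hy)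
    exact ⟨k, Finset.le_sup (f := id) hkt, hk⟩
  -- iterates are open maps
  have hOk : ∀ k, IsOpenMap (f^[k]) := by
    intro k
    induction k with
    | zero => exact IsOpenMap.id
    | succ k ih =>
      rw [Function.iterate_succ']
      exact hopen.comp ih
  -- Key claim: for k > m, any non-escaping point equals f^[k] x
  have claimA : ∀ k, m < k → ∀ z, z ∉ escapingSet f → z = f^[k] x := by
    intro k hk z hz
    set ρ : ℝ := 2 ^ (k - m) * R' with hρ
    have hRρ : R' < ρ := by
      have h1 : (2:ℝ) ^ 1 ≤ 2 ^ (k - m) := pow_le_pow_right₀ one_le_two (by omega)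
      have : (2:ℝ) ≤ 2 ^ (k - m) := by simpa using h1
      nlinarith
    set U := f^[k] '' ball x δ with hU
    have hUopen : IsOpen U := hOk k _ isOpen_ball
    have hclosure : closure U ⊆ f^[k] '' closedBall x δ :=
      closure_minimal (image_mono ball_subset_closedBall)
        ((isCompact_closedBall x δ).image (hf.iterate k)).isClosed
    have hfront : ∀ w ∈ frontier U, ρ ≤ ‖w‖ := by
      intro w hw
      rw [hUopen.frontier_eq] at hw
      obtain ⟨hw1, hw2⟩ := hw
      obtain ⟨u, hu, rfl⟩ := hclosure hw1
      have husph : u ∈ sphere x δ := by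
        rw [mem_sphere]
        refine le_antisymm (mem_closedBall.mp hu) (not_lt.mp fun hlt => hw2 ?_)
        exact ⟨u, mem_ball.mpr hlt, rfl⟩
      obtain ⟨k0, hk0m, hk0⟩ := hunif u husph
      have hsplit : f^[k] u = f^[k - k0] (f^[k0] u) := by
        rw [← Function.iterate_add_apply]
        congr 1
        omega
      have hbig := aux_big hR' hgrow hk0 (k - k0)
      have hpow : (2:ℝ) ^ (k - m) ≤ 2 ^ (k - k0) := pow_le_pow_right₀ one_le_two (by omega)
      rw [hsplit]
      calc ρ ≤ 2 ^ (k - k0) * R' := by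
            exact mul_le_mul_of_nonneg_right hpow hR'.le
        _ ≤ _ := hbig.le
    have hxk : f^[k] x ∈ U := ⟨x, mem_ball_self hδ, rfl⟩
    have hxknorm : ‖f^[k] x‖ ≤ R' := aux_bounded hR' hgrow hx k
    -- the ball of radius ρ is contained in U
    have hball : ball (0 : EuclideanSpace ℝ (Fin n)) ρ ⊆ U := by
      apply IsPreconnected.subset_left_of_subset_union hUopen
        isClosed_closure.isOpen_compl
        (Disjoint.mono_left subset_closure disjoint_compl_right)
        ?_ ?_ (convex_ball 0 ρ).isPreconnected
      · intro y hy
        by_cases hyc : y ∈ closure U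
        · by_cases hyU : y ∈ U
          · exact Or.inl hyU
          · exfalso
            have : y ∈ frontier U := by rw [hUopen.frontier_eq]; exact ⟨hyc, hyU⟩
            have h1 := hfront y this
            rw [mem_ball, dist_zero_right] at hy
            linarith
        · exact Or.inr hyc
      · exact ⟨f^[k] x, by rw [mem_ball, dist_zero_right]; linarith, hxk⟩
    have hznorm : ‖z‖ ≤ R' := by simpa using aux_bounded hR' hgrow hz 0
    have hzU : z ∈ U := hball (by rw [mem_ball, dist_zero_right]; linarith)
    obtain ⟨w, hwball, hwz⟩ := hzU
    have hwns : w ∉ escapingSet f := fun hw => hz (hwz ▸ (aux_iter_mem k w).mp hw)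
    have hwx : w = x := by
      by_contra hne
      refine hwns (hpunct w ?_ ?_)
      · exact norm_pos_iff.mpr (sub_ne_zero_of_ne hne)
      · rw [← dist_eq_norm]
        have := mem_ball.mp hwball
        linarith
    rw [← hwz, hwx]
  have h1 : f^[m + 1] x = x := (claimA (m + 1) (by omega) x hx).symm
  refine ⟨⟨m + 1, by omega, h1⟩, ?_⟩
  intro y hy
  by_contra hyns
  exact hy ((claimA (m + 1) (by omega) y hyns).trans h1)
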